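/- (Energy estimate) Let u ∈ AC([0,T]; L²(ℝⁿ)) be such that Qu(t) := Σ_k a_k(t,·)∂_{x_k}u(t,·) + c(t,·)u(t,·) ∈ L¹([0,T]; L²), and suppose the Gårding-type inequality Re⟨Qu(τ), u(τ)⟩_{L²} ≥ -h(τ)‖u(τ)‖_{L²}² holds a.e. with 0 ≤ h ∈ L¹([0,T]). Then for all t ∈ [0,T]: sup_{r∈[0,t]} ‖u(r)‖_{L²} ≤ exp(∫_0^t h(σ)dσ) (‖u(0)‖_{L²} + 2∫_0^t ‖(∂_t u + Qu)(r)‖_{L²} dr). -/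

import Mathlib

open MeasureTheory intervalIntegral

section Stmt15Aux

lemma aux_II {X : Type*} [NormedAddCommGroup X] {q : ℝ → X} {T x y : ℝ}
    (hq : IntegrableOn q (Set.Icc 0 T)) (hx : x ∈ Set.Icc 0 T) (hy : y ∈ Set.Icc 0 T) :
    IntervalIntegrable q volume x y := by
  rw [intervalIntegrable_iff]
  exact hq.mono_set (Set.uIoc_subset_uIcc.trans (Set.uIcc_subset_Icc hx hy))

lemma aux_primitive_cont {X : Type*} [NormedAddCommGroup X] [NormedSpace ℝ X]
    {q : ℝ → X} {T : ℝ} (hq : IntegrableOn q (Set.Icc 0 T)) :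
    ContinuousOn (fun x => ∫ t in (0:ℝ)..x, q t) (Set.Icc 0 T) := by
  refine (intervalIntegral.continuousOn_primitive hq).congr fun x hx => ?_
  exact integral_of_le hx.1

end Stmt15Aux
set_option maxHeartbeats 2000000 in
lemma aux_stepC (T c : ℝ) (hc : 0 < c) (b k : ℝ → ℝ)
    (hb : IntegrableOn b (Set.Icc 0 T)) (hk : IntegrableOn k (Set.Icc 0 T))
    (hb0 : ∀ x, 0 ≤ b x) (hk0 : ∀ x, 0 ≤ k x) :
    ∀ s ∈ Set.Icc 0 T,
      ∫ r in (0:ℝ)..s,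
          (2 * b r * Real.exp (2 * ∫ x in (0:ℝ)..r, b x) * (c + 2 * ∫ x in (0:ℝ)..r, k x) ^ 2
            + 4 * k r * Real.exp (2 * ∫ x in (0:ℝ)..r, b x) * (c + 2 * ∫ x in (0:ℝ)..r, k x))
        ≤ Real.exp (2 * ∫ x in (0:ℝ)..s, b x) * (c + 2 * ∫ x in (0:ℝ)..s, k x) ^ 2 - c ^ 2 := by
  intro s hs
  have hT0 : 0 ≤ T := le_trans hs.1 hs.2
  have h0Icc : (0:ℝ) ∈ Set.Icc 0 T := ⟨le_refl _, hT0⟩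
  set B : ℝ → ℝ := fun r => ∫ x in (0:ℝ)..r, b x with hBdef
  set F : ℝ → ℝ := fun r => ∫ x in (0:ℝ)..r, k x with hFdef
  set a : ℝ → ℝ := fun r => c + 2 * F r with hadef
  set w : ℝ → ℝ := fun r => 2 * b r * Real.exp (2 * B r) * a r ^ 2
      + 4 * k r * Real.exp (2 * B r) * a r with hwdef
  set P : ℝ → ℝ := fun r => Real.exp (2 * B r) * a r ^ 2 with hPdef
  -- basic facts
  have hBdiff : ∀ x ∈ Set.Icc 0 T, ∀ y ∈ Set.Icc 0 T, B y - B x = ∫ t in x..y, b t := by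
    intro x hx y hy
    have := integral_add_adjacent_intervals (aux_II hb h0Icc hx) (aux_II hb hx hy)
    simp only [hBdef]
    linarith [this]
  have hFdiff : ∀ x ∈ Set.Icc 0 T, ∀ y ∈ Set.Icc 0 T, F y - F x = ∫ t in x..y, k t := by
    intro x hx y hy
    have := integral_add_adjacent_intervals (aux_II hk h0Icc hx) (aux_II hk hx hy)
    simp only [hFdef]
    linarith [this]
  have hBmono : ∀ x ∈ Set.Icc 0 T, ∀ y ∈ Set.Icc 0 T, x ≤ y → B x ≤ B y := by
    intro x hx y hy hxy
    have h1 : 0 ≤ ∫ t in x..y, b t := integral_nonneg hxy (fun u _ => hb0 u)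
    linarith [hBdiff x hx y hy]
  have hFmono : ∀ x ∈ Set.Icc 0 T, ∀ y ∈ Set.Icc 0 T, x ≤ y → F x ≤ F y := by
    intro x hx y hy hxy
    have h1 : 0 ≤ ∫ t in x..y, k t := integral_nonneg hxy (fun u _ => hk0 u)
    linarith [hFdiff x hx y hy]
  have hB0 : B 0 = 0 := integral_same
  have hF0 : F 0 = 0 := integral_same
  have hFnonneg : ∀ x ∈ Set.Icc 0 T, 0 ≤ F x := by
    intro x hx
    have := hFmono 0 h0Icc x hx hx.1
    simpa [hF0] using this
  have hapos : ∀ x ∈ Set.Icc 0 T, 0 < a x := by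
    intro x hx
    have := hFnonneg x hx
    simp only [hadef]
    nlinarith
  have hamono : ∀ x ∈ Set.Icc 0 T, ∀ y ∈ Set.Icc 0 T, x ≤ y → a x ≤ a y := by
    intro x hx y hy hxy
    have := hFmono x hx y hy hxy
    simp only [hadef]; linarith
  -- continuity
  have hBc : ContinuousOn B (Set.Icc 0 T) := aux_primitive_cont hb
  have hFc : ContinuousOn F (Set.Icc 0 T) := aux_primitive_cont hk
  have hac : ContinuousOn a (Set.Icc 0 T) := continuousOn_const.add (continuousOn_const.mul hFc)
  have hexpc : ContinuousOn (fun r => Real.exp (2 * B r)) (Set.Icc 0 T) :=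
    Real.continuous_exp.comp_continuousOn (continuousOn_const.mul hBc)
  have hPc : ContinuousOn P (Set.Icc 0 T) := hexpc.mul (hac.pow 2)
  -- integrability of w
  have hwint : IntegrableOn w (Set.Icc 0 T) := by
    have m1 : AEStronglyMeasurable (fun r => 2 * Real.exp (2 * B r) * a r ^ 2)
        (volume.restrict (Set.Icc 0 T)) :=
      (((continuousOn_const.mul hexpc).mul (hac.pow 2))).aestronglyMeasurable measurableSet_Icc
    have m2 : AEStronglyMeasurable (fun r => 4 * Real.exp (2 * B r) * a r)
        (volume.restrict (Set.Icc 0 T)) :=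
      ((continuousOn_const.mul hexpc).mul hac).aestronglyMeasurable measurableSet_Icc
    obtain ⟨C1, hC1⟩ := (isCompact_Icc (a := (0:ℝ)) (b := T)).exists_bound_of_continuousOn
      ((continuousOn_const.mul hexpc).mul (hac.pow 2))
    obtain ⟨C2, hC2⟩ := (isCompact_Icc (a := (0:ℝ)) (b := T)).exists_bound_of_continuousOn
      ((continuousOn_const.mul hexpc).mul hac)
    have i1 : IntegrableOn (fun r => (2 * Real.exp (2 * B r) * a r ^ 2) * b r)
        (Set.Icc 0 T) := by
      refine Integrable.bdd_mul (c := C1) hb m1 ?_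
      filter_upwards [ae_restrict_mem measurableSet_Icc] with x hx
      exact hC1 x hx
    have i2 : IntegrableOn (fun r => (4 * Real.exp (2 * B r) * a r) * k r)
        (Set.Icc 0 T) := by
      refine Integrable.bdd_mul (c := C2) hk m2 ?_
      filter_upwards [ae_restrict_mem measurableSet_Icc] with x hx
      exact hC2 x hx
    have : w = fun r => (2 * Real.exp (2 * B r) * a r ^ 2) * b r
        + (4 * Real.exp (2 * B r) * a r) * k r := by
      funext r; simp only [hwdef]; ring
    rw [this]
    exact i1.add i2
  set W : ℝ → ℝ := fun r => ∫ t in (0:ℝ)..r, w t with hWdef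
  have hWc : ContinuousOn W (Set.Icc 0 T) := aux_primitive_cont hwint
  have hWdiff : ∀ x ∈ Set.Icc 0 T, ∀ y ∈ Set.Icc 0 T, W y - W x = ∫ t in x..y, w t := by
    intro x hx y hy
    have := integral_add_adjacent_intervals (aux_II hwint h0Icc hx) (aux_II hwint hx hy)
    simp only [hWdef]
    linarith [this]
  -- the key claim
  have key : ∀ ε > 0, ∀ r ∈ Set.Icc 0 T, c ^ 2 < P r - W r + ε * (B r + a r) := by
    intro ε hε
    by_contra hcon
    push_neg at hcon
    obtain ⟨r₀, hr₀Icc, hr₀le⟩ := hcon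
    set S : Set ℝ := Set.Icc 0 T ∩ {r | P r - W r + ε * (B r + a r) ≤ c ^ 2} with hSdef
    have hSne : S.Nonempty := ⟨r₀, hr₀Icc, hr₀le⟩
    have hScl : IsClosed S := by
      have hcont : ContinuousOn (fun r => P r - W r + ε * (B r + a r)) (Set.Icc 0 T) :=
        (hPc.sub hWc).add (continuousOn_const.mul (hBc.add hac))
      have : S = Set.Icc 0 T ∩
          ((fun r => P r - W r + ε * (B r + a r)) ⁻¹' Set.Iic (c ^ 2)) := rfl
      rw [this]
      exact hcont.preimage_isClosed_of_isClosed isClosed_Icc isClosed_Iic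
    set t₁ := sInf S with ht₁def
    have ht₁S : t₁ ∈ S := hScl.csInf_mem hSne ⟨0, fun x hx => hx.1.1⟩
    obtain ⟨ht₁Icc, ht₁le⟩ := ht₁S
    have ht₁le : P t₁ - W t₁ + ε * (B t₁ + a t₁) ≤ c ^ 2 := ht₁le
    have ht₁pos : 0 < t₁ := by
      rcases eq_or_lt_of_le ht₁Icc.1 with heq | hlt
      · exfalso
        rw [← heq] at ht₁le
        have hW0 : W 0 = 0 := integral_same
        have hP0 : P 0 = c ^ 2 := by simp [hPdef, hadef, hB0, hF0]
        have ha0 : a 0 = c := by simp [hadef, hF0]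
        rw [hW0, hP0, hB0, ha0] at ht₁le
        nlinarith [mul_pos hε hc]
      · exact hlt
    have hnotS : ∀ x, 0 ≤ x → x < t₁ → c ^ 2 < P x - W x + ε * (B x + a x) := by
      intro x hx0 hxlt
      have hxIcc : x ∈ Set.Icc 0 T := ⟨hx0, le_trans hxlt.le ht₁Icc.2⟩
      by_contra hle
      push_neg at hle
      have : t₁ ≤ x := csInf_le ⟨0, fun y hy => hy.1.1⟩ ⟨hxIcc, hle⟩
      linarith
    -- choose σ close to t₁ from the left
    set seq : ℕ → ℝ := fun n => t₁ - t₁ / (n + 2) with hseqdef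
    have hseq_lt : ∀ n, seq n < t₁ := by
      intro n
      have : 0 < t₁ / ((n:ℝ) + 2) := by positivity
      simp only [hseqdef]
      linarith
    have hseq_mem : ∀ n, seq n ∈ Set.Icc 0 T := by
      intro n
      have hd : 0 < t₁ / ((n:ℝ) + 2) := by positivity
      have hd2 : t₁ / ((n:ℝ) + 2) ≤ t₁ := by
        rw [div_le_iff₀ (by positivity)]
        nlinarith [ht₁pos.le]
      exact ⟨by simp only [hseqdef]; linarith,
        by simp only [hseqdef]; linarith [ht₁Icc.2]⟩
    have hseq_tend : Filter.Tendsto seq Filter.atTop (nhds t₁) := by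
      have h0 : Filter.Tendsto (fun n : ℕ => t₁ / ((n:ℝ) + 2)) Filter.atTop (nhds 0) := by
        have := (tendsto_const_div_atTop_nhds_zero_nat t₁).comp (Filter.tendsto_add_atTop_nat 2)
        have heq : (fun n : ℕ => t₁ / ((n:ℝ) + 2))
            = (fun n : ℕ => t₁ / (n:ℝ)) ∘ (fun n : ℕ => n + 2) := by
          funext n
          simp only [Function.comp]
          push_cast
          ring
        rw [heq]
        exact this
      have h1 := Filter.Tendsto.const_sub t₁ h0
      simp only [sub_zero] at h1
      exact h1
    have hseq_tend' : Filter.Tendsto seq Filter.atTop (nhdsWithin t₁ (Set.Icc 0 T)) :=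
      tendsto_nhdsWithin_of_tendsto_nhds_of_eventually_within _ hseq_tend
        (Filter.Eventually.of_forall hseq_mem)
    have htendE : Filter.Tendsto (fun n => Real.exp (2 * B (seq n))) Filter.atTop
        (nhds (Real.exp (2 * B t₁))) := (hexpc t₁ ht₁Icc).tendsto.comp hseq_tend'
    have htendA : Filter.Tendsto (fun n => Real.exp (2 * B (seq n)) * a (seq n)) Filter.atTop
        (nhds (Real.exp (2 * B t₁) * a t₁)) :=
      ((hexpc.mul hac) t₁ ht₁Icc).tendsto.comp hseq_tend'
    have hev1 : ∀ᶠ n in Filter.atTop,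
        2 * a t₁ ^ 2 * (Real.exp (2 * B t₁) - Real.exp (2 * B (seq n))) < ε := by
      have ht : Filter.Tendsto
          (fun n => 2 * a t₁ ^ 2 * (Real.exp (2 * B t₁) - Real.exp (2 * B (seq n))))
          Filter.atTop (nhds (2 * a t₁ ^ 2 * (Real.exp (2 * B t₁) - Real.exp (2 * B t₁)))) :=
        tendsto_const_nhds.mul (tendsto_const_nhds.sub htendE)
      simp only [sub_self, mul_zero] at ht
      exact ht.eventually_lt_const hε
    have hev2 : ∀ᶠ n in Filter.atTop,
        4 * (Real.exp (2 * B t₁) * a t₁ - Real.exp (2 * B (seq n)) * a (seq n)) < 2 * ε := by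
      have ht : Filter.Tendsto
          (fun n => 4 * (Real.exp (2 * B t₁) * a t₁ - Real.exp (2 * B (seq n)) * a (seq n)))
          Filter.atTop (nhds (4 * (Real.exp (2 * B t₁) * a t₁ - Real.exp (2 * B t₁) * a t₁))) :=
        tendsto_const_nhds.mul (tendsto_const_nhds.sub htendA)
      simp only [sub_self, mul_zero] at ht
      exact ht.eventually_lt_const (by linarith)
    obtain ⟨n, h1n, h2n⟩ := (hev1.and hev2).exists
    set σ := seq n with hσdef
    have hσIcc : σ ∈ Set.Icc 0 T := hseq_mem n
    have hσlt : σ < t₁ := hseq_lt n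
    have hσS := hnotS σ hσIcc.1 hσlt
    have hΔB : 0 ≤ B t₁ - B σ := by linarith [hBmono σ hσIcc t₁ ht₁Icc hσlt.le]
    have hΔF : 0 ≤ F t₁ - F σ := by linarith [hFmono σ hσIcc t₁ ht₁Icc hσlt.le]
    have haσt : a t₁ - a σ = 2 * (F t₁ - F σ) := by simp only [hadef]; ring
    have hW : W t₁ - W σ ≤ (2 * Real.exp (2 * B t₁) * a t₁ ^ 2) * (B t₁ - B σ)
        + (4 * Real.exp (2 * B t₁) * a t₁) * (F t₁ - F σ) := by
      rw [hWdiff σ hσIcc t₁ ht₁Icc]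
      have hmono : ∀ x ∈ Set.Icc σ t₁, w x ≤ (2 * Real.exp (2 * B t₁) * a t₁ ^ 2) * b x
          + (4 * Real.exp (2 * B t₁) * a t₁) * k x := by
        intro x hx
        have hxIcc : x ∈ Set.Icc 0 T := ⟨le_trans hσIcc.1 hx.1, le_trans hx.2 ht₁Icc.2⟩
        have hBx : B x ≤ B t₁ := hBmono x hxIcc t₁ ht₁Icc hx.2
        have hax : a x ≤ a t₁ := hamono x hxIcc t₁ ht₁Icc hx.2
        have hax0 : 0 < a x := hapos x hxIcc
        have hex : Real.exp (2 * B x) ≤ Real.exp (2 * B t₁) := Real.exp_le_exp.2 (by linarith)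
        simp only [hwdef]
        have hsq : a x ^ 2 ≤ a t₁ ^ 2 := pow_le_pow_left₀ hax0.le hax 2
        have t1 : 2 * b x * Real.exp (2 * B x) * a x ^ 2
            ≤ (2 * Real.exp (2 * B t₁) * a t₁ ^ 2) * b x := by
          calc 2 * b x * Real.exp (2 * B x) * a x ^ 2
              = (Real.exp (2 * B x) * a x ^ 2) * (2 * b x) := by ring
            _ ≤ (Real.exp (2 * B t₁) * a t₁ ^ 2) * (2 * b x) :=
                mul_le_mul_of_nonneg_right
                  (mul_le_mul hex hsq (sq_nonneg _) (Real.exp_pos _).le)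
                  (by linarith [hb0 x])
            _ = (2 * Real.exp (2 * B t₁) * a t₁ ^ 2) * b x := by ring
        have t2 : 4 * k x * Real.exp (2 * B x) * a x
            ≤ (4 * Real.exp (2 * B t₁) * a t₁) * k x := by
          calc 4 * k x * Real.exp (2 * B x) * a x
              = (Real.exp (2 * B x) * a x) * (4 * k x) := by ring
            _ ≤ (Real.exp (2 * B t₁) * a t₁) * (4 * k x) :=
                mul_le_mul_of_nonneg_right
                  (mul_le_mul hex hax hax0.le (Real.exp_pos _).le)
                  (by linarith [hk0 x])
            _ = (4 * Real.exp (2 * B t₁) * a t₁) * k x := by ring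
        linarith
      have hInt1 : IntervalIntegrable w volume σ t₁ := aux_II hwint hσIcc ht₁Icc
      have hInt2 : IntervalIntegrable (fun x => (2 * Real.exp (2 * B t₁) * a t₁ ^ 2) * b x
          + (4 * Real.exp (2 * B t₁) * a t₁) * k x) volume σ t₁ :=
        ((aux_II hb hσIcc ht₁Icc).const_mul _).add ((aux_II hk hσIcc ht₁Icc).const_mul _)
      calc ∫ t in σ..t₁, w t
          ≤ ∫ x in σ..t₁, ((2 * Real.exp (2 * B t₁) * a t₁ ^ 2) * b x
              + (4 * Real.exp (2 * B t₁) * a t₁) * k x) :=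
            intervalIntegral.integral_mono_on hσlt.le hInt1 hInt2 hmono
        _ = (2 * Real.exp (2 * B t₁) * a t₁ ^ 2) * (B t₁ - B σ)
              + (4 * Real.exp (2 * B t₁) * a t₁) * (F t₁ - F σ) := by
            rw [intervalIntegral.integral_add ((aux_II hb hσIcc ht₁Icc).const_mul _)
                ((aux_II hk hσIcc ht₁Icc).const_mul _),
              intervalIntegral.integral_const_mul, intervalIntegral.integral_const_mul,
              ← hBdiff σ hσIcc t₁ ht₁Icc, ← hFdiff σ hσIcc t₁ ht₁Icc]
    have hP' : (2 * Real.exp (2 * B σ) * a t₁ ^ 2) * (B t₁ - B σ)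
        + (4 * Real.exp (2 * B σ) * a σ) * (F t₁ - F σ) ≤ P t₁ - P σ := by
      have hexp_ineq : Real.exp (2 * B σ) * (1 + 2 * (B t₁ - B σ)) ≤ Real.exp (2 * B t₁) := by
        have harg : 2 * B t₁ = 2 * B σ + 2 * (B t₁ - B σ) := by ring
        rw [harg, Real.exp_add]
        have := mul_le_mul_of_nonneg_left (Real.add_one_le_exp (2 * (B t₁ - B σ)))
          (Real.exp_pos (2 * B σ)).le
        linarith
      have haσ : 0 < a σ := hapos σ hσIcc
      have hat : a σ ≤ a t₁ := by linarith
      simp only [hPdef]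
      have key1 := mul_le_mul_of_nonneg_right hexp_ineq (sq_nonneg (a t₁))
      have hA : a t₁ = a σ + 2 * (F t₁ - F σ) := by linarith
      have key3 : Real.exp (2 * B σ) * a t₁ ^ 2
          = Real.exp (2 * B σ) * a σ ^ 2
            + 4 * (Real.exp (2 * B σ) * a σ) * (F t₁ - F σ)
            + 4 * Real.exp (2 * B σ) * (F t₁ - F σ) ^ 2 := by
        rw [hA]; ring
      have key4 : 0 ≤ Real.exp (2 * B σ) * (F t₁ - F σ) ^ 2 :=
        mul_nonneg (Real.exp_pos _).le (sq_nonneg _)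
      linarith [key1, key3, key4]
    have hd1 : (2 * Real.exp (2 * B t₁) * a t₁ ^ 2) * (B t₁ - B σ)
        ≤ (2 * Real.exp (2 * B σ) * a t₁ ^ 2) * (B t₁ - B σ) + ε * (B t₁ - B σ) := by
      nlinarith [mul_le_mul_of_nonneg_right h1n.le hΔB]
    have hd2 : (4 * Real.exp (2 * B t₁) * a t₁) * (F t₁ - F σ)
        ≤ (4 * Real.exp (2 * B σ) * a σ) * (F t₁ - F σ) + 2 * ε * (F t₁ - F σ) := by
      nlinarith [mul_le_mul_of_nonneg_right h2n.le hΔF]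
    clear_value σ seq t₁ B F a w P W
    have hcomb : (P t₁ - P σ) - (W t₁ - W σ)
        + ε * ((B t₁ - B σ) + (a t₁ - a σ)) < 0 := by
      have e1 : ε * (B t₁ + a t₁) - ε * (B σ + a σ)
          = ε * ((B t₁ - B σ) + (a t₁ - a σ)) := by ring
      linarith [hσS, ht₁le, e1.le, e1.ge]
    rw [haσt] at hcomb
    linarith [hW, hP', hd1, hd2, hcomb]
  -- conclude from key
  have hfinal : W s ≤ P s - c ^ 2 := by
    have hBas : 0 < B s + a s := by
      have h1 : 0 ≤ B s := by
        have := hBmono 0 h0Icc s hs hs.1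
        simpa [hB0] using this
      linarith [hapos s hs]
    refine le_of_forall_pos_le_add fun ε' hε' => ?_
    have := key (ε' / (B s + a s)) (by positivity) s hs
    have heq : ε' / (B s + a s) * (B s + a s) = ε' := by field_simp
    linarith [this, heq]
  exact hfinal

section FubiniSq

variable {E : Type*} [NormedAddCommGroup E] [InnerProductSpace ℂ E] [CompleteSpace E]

local notation "⟪" x ", " y "⟫" => @inner ℂ _ _ x y

set_option maxHeartbeats 1000000 in
lemma aux_fubini_sq (g : ℝ → E) (s : ℝ) (hg : IntegrableOn g (Set.Ioc 0 s)) :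
    ‖∫ r in Set.Ioc 0 s, g r‖ ^ 2
      = ∫ r in Set.Ioc 0 s, 2 * (RCLike.re ⟪g r, ∫ σ in Set.Ioc 0 r, g σ⟫) := by
  set ν := volume.restrict (Set.Ioc 0 s) with hν
  have hgν : Integrable g ν := hg
  set K : ℝ × ℝ → ℝ := fun p => RCLike.re ⟪g p.1, g p.2⟫ with hK
  have hKm : AEStronglyMeasurable K (ν.prod ν) := by
    have h1 : AEStronglyMeasurable (fun p : ℝ × ℝ => g p.1) (ν.prod ν) := hgν.1.comp_fst
    have h2 : AEStronglyMeasurable (fun p : ℝ × ℝ => g p.2) (ν.prod ν) := hgν.1.comp_snd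
    exact (RCLike.continuous_re.comp continuous_inner).comp_aestronglyMeasurable
      (h1.prodMk h2)
  have hKi : Integrable K (ν.prod ν) := by
    refine (hgν.norm.mul_prod hgν.norm).mono hKm ?_
    refine Filter.Eventually.of_forall fun p => ?_
    simp only [hK, Real.norm_eq_abs]
    calc |RCLike.re ⟪g p.1, g p.2⟫| ≤ ‖(⟪g p.1, g p.2⟫ : ℂ)‖ := RCLike.abs_re_le_norm _
      _ ≤ ‖g p.1‖ * ‖g p.2‖ := norm_inner_le_norm _ _
      _ ≤ |‖g p.1‖ * ‖g p.2‖| := le_abs_self _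
  have hV : ∀ c : E, ∫ r, RCLike.re ⟪c, g r⟫ ∂ν = RCLike.re ⟪c, ∫ r, g r ∂ν⟫ := by
    intro c
    rw [← integral_inner hgν c, integral_re (hgν.const_inner c)]
  set V : E := ∫ r, g r ∂ν with hVdef
  -- step 1
  have step1 : ∫ p, K p ∂(ν.prod ν) = ‖V‖ ^ 2 := by
    rw [MeasureTheory.integral_prod _ hKi]
    have e1 : ∀ r, (∫ σ, K (r, σ) ∂ν) = RCLike.re ⟪g r, V⟫ := fun r => hV (g r)
    calc ∫ r, (∫ σ, K (r, σ) ∂ν) ∂ν = ∫ r, RCLike.re ⟪g r, V⟫ ∂ν := by simp_rw [e1]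
      _ = ∫ r, RCLike.re ⟪V, g r⟫ ∂ν := by simp_rw [inner_re_symm]
      _ = RCLike.re ⟪V, V⟫ := hV V
      _ = ‖V‖ ^ 2 := inner_self_eq_norm_sq V
  -- diagonal is null
  have hdiagm : MeasurableSet {p : ℝ × ℝ | p.1 = p.2} :=
    measurableSet_eq_fun measurable_fst measurable_snd
  have hdiag : (ν.prod ν) {p : ℝ × ℝ | p.1 = p.2} = 0 := by
    rw [Measure.prod_apply hdiagm]
    have e0 : ∀ r : ℝ, ν (Prod.mk r ⁻¹' {p : ℝ × ℝ | p.1 = p.2}) = 0 := by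
      intro r
      have e1 : (Prod.mk r ⁻¹' {p : ℝ × ℝ | p.1 = p.2}) = {r} := by
        ext y; simp [eq_comm]
      rw [e1, hν, Measure.restrict_apply (measurableSet_singleton r)]
      exact measure_mono_null Set.inter_subset_left (measure_singleton r)
    simp [e0]
  set A : Set (ℝ × ℝ) := {p : ℝ × ℝ | p.2 ≤ p.1} with hA
  have hAm : MeasurableSet A := measurableSet_le measurable_snd measurable_fst
  -- swap argument
  have hswap : ∫ p in Aᶜ, K p ∂(ν.prod ν) = ∫ p in A, K p ∂(ν.prod ν) := by
    have hmapeq : (ν.prod ν) = Measure.map Prod.swap (ν.prod ν) := (Measure.prod_swap).symm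
    have e1 : ∫ p in Aᶜ, K p ∂(ν.prod ν)
        = ∫ p in Prod.swap ⁻¹' Aᶜ, K (Prod.swap p) ∂(ν.prod ν) := by
      conv_lhs => rw [hmapeq]
      refine setIntegral_map hAm.compl ?_ measurable_swap.aemeasurable
      rw [← hmapeq]
      exact hKm
    have e2 : ∀ p : ℝ × ℝ, K (Prod.swap p) = K p := by
      intro p; simp only [hK, Prod.swap]; exact inner_re_symm _ _
    have e3 : (Prod.swap ⁻¹' Aᶜ : Set (ℝ × ℝ)) = {p : ℝ × ℝ | p.1 ≤ p.2}ᶜ := by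
      ext p; simp [hA, Prod.swap]
    have e4 : ({p : ℝ × ℝ | p.1 ≤ p.2}ᶜ : Set (ℝ × ℝ)) =ᵐ[ν.prod ν] A := by
      rw [MeasureTheory.ae_eq_set]
      constructor
      · refine measure_mono_null ?_ hdiag
        intro p hp
        simp only [Set.mem_diff, Set.mem_compl_iff, Set.mem_setOf_eq, hA] at hp
        simp only [Set.mem_setOf_eq]
        linarith [hp.1, hp.2]
      · refine measure_mono_null ?_ hdiag
        intro p hp
        simp only [Set.mem_diff, Set.mem_compl_iff, Set.mem_setOf_eq, hA, not_not] at hp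
        simp only [Set.mem_setOf_eq]
        linarith [hp.1, hp.2]
    rw [e1]
    simp_rw [e2]
    rw [e3, setIntegral_congr_set e4]
  have step2 : ∫ p, K p ∂(ν.prod ν) = 2 * ∫ p in A, K p ∂(ν.prod ν) := by
    have := MeasureTheory.integral_add_compl hAm hKi
    linarith [this, hswap]
  -- step 3
  have step3 : ∫ p in A, K p ∂(ν.prod ν)
      = ∫ r, RCLike.re ⟪g r, ∫ σ in Set.Ioc 0 r, g σ⟫ ∂ν := by
    rw [← MeasureTheory.integral_indicator hAm,
      MeasureTheory.integral_prod _ (hKi.indicator hAm)]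
    refine integral_congr_ae ?_
    filter_upwards [ae_restrict_mem measurableSet_Ioc] with r hr
    have e1 : (fun σ => A.indicator K (r, σ))
        = Set.indicator (Set.Iic r) (fun σ => K (r, σ)) := by
      funext σ
      by_cases hc : σ ≤ r
      · rw [Set.indicator_of_mem (by simpa [hA] using hc),
          Set.indicator_of_mem (by simpa using hc)]
      · rw [Set.indicator_of_notMem (by simpa [hA] using hc),
          Set.indicator_of_notMem (by simpa using hc)]
    rw [e1, MeasureTheory.integral_indicator measurableSet_Iic, hν,
      Measure.restrict_restrict measurableSet_Iic]
    have hseteq : Set.Iic r ∩ Set.Ioc 0 s = Set.Ioc 0 r := by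
      ext x
      simp only [Set.mem_inter_iff, Set.mem_Iic, Set.mem_Ioc]
      exact ⟨fun ⟨h1, h2, h3⟩ => ⟨h2, h1⟩, fun ⟨h1, h2⟩ => ⟨h2, h1, le_trans h2 hr.2⟩⟩
    rw [hseteq]
    have hgr : Integrable g (volume.restrict (Set.Ioc 0 r)) :=
      hg.mono_set (Set.Ioc_subset_Ioc le_rfl hr.2)
    rw [← integral_inner hgr (g r), integral_re (hgr.const_inner (g r))]
  calc ‖∫ r in Set.Ioc 0 s, g r‖ ^ 2 = ‖V‖ ^ 2 := rfl
    _ = 2 * ∫ r, RCLike.re ⟪g r, ∫ σ in Set.Ioc 0 r, g σ⟫ ∂ν := by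
        rw [← step3, ← step2, step1]
    _ = ∫ r, 2 * RCLike.re ⟪g r, ∫ σ in Set.Ioc 0 r, g σ⟫ ∂ν := by
        rw [MeasureTheory.integral_const_mul]
    _ = _ := rfl

end FubiniSq

section MainAux

variable {E : Type*} [NormedAddCommGroup E] [InnerProductSpace ℂ E] [CompleteSpace E]

local notation "⟪" x ", " y "⟫" => @inner ℂ _ _ x y

lemma aux_inner_int {ν : Measure ℝ} {g v : ℝ → E} (hg : Integrable g ν)
    (hv : AEStronglyMeasurable v ν) (C : ℝ) (hC : ∀ᵐ x ∂ν, ‖v x‖ ≤ C) :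
    Integrable (fun x => 2 * RCLike.re ⟪g x, v x⟫) ν := by
  have hasm : AEStronglyMeasurable (fun x => 2 * RCLike.re ⟪g x, v x⟫) ν := by
    refine AEStronglyMeasurable.const_mul ?_ 2
    exact (RCLike.continuous_re.comp continuous_inner).comp_aestronglyMeasurable
      (hg.1.prodMk hv)
  refine Integrable.mono' (hg.norm.const_mul (2 * C)) hasm ?_
  filter_upwards [hC] with x hx
  have h1 : |RCLike.re ⟪g x, v x⟫| ≤ ‖g x‖ * ‖v x‖ :=
    le_trans (RCLike.abs_re_le_norm _) (norm_inner_le_norm _ _)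
  have h2 : ‖g x‖ * ‖v x‖ ≤ ‖g x‖ * C := mul_le_mul_of_nonneg_left hx (norm_nonneg _)
  rw [Real.norm_eq_abs, abs_mul]
  calc |(2:ℝ)| * |RCLike.re ⟪g x, v x⟫| = 2 * |RCLike.re ⟪g x, v x⟫| := by norm_num
    _ ≤ 2 * (‖g x‖ * C) := by linarith [le_trans h1 h2, abs_nonneg (RCLike.re ⟪g x, v x⟫)]
    _ = 2 * C * ‖g x‖ := by ring

end MainAux

local notation "⟪" x ", " y "⟫" => @inner ℂ _ _ x y

set_option maxHeartbeats 4000000 in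
/-- Energy estimate: if `u ∈ AC([0,T];L²)` solves `∂_t u + Qu = f` (in integral form)
with `Qu ∈ L¹([0,T];L²)` and the Gårding-type inequality
`Re⟨Qu(τ), u(τ)⟩ ≥ -h(τ)‖u(τ)‖²` holds a.e. with `0 ≤ h ∈ L¹([0,T])`, then
`sup_{r∈[0,t]} ‖u(r)‖ ≤ exp(∫_0^t h)(‖u(0)‖ + 2∫_0^t ‖(∂_t u + Qu)(r)‖ dr)`.
(The Hilbert space `E` plays the role of `L²(ℝⁿ)`.) -/
theorem stmt_15 {E : Type*} [NormedAddCommGroup E] [InnerProductSpace ℂ E]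
    [CompleteSpace E]
    (T : ℝ) (hT : 0 < T)
    (u Qu f : ℝ → E)
    (hQu_int : IntegrableOn Qu (Set.Icc 0 T))
    (hf_int : IntegrableOn f (Set.Icc 0 T))
    (hu : ∀ s ∈ Set.Icc 0 T, u s = u 0 + ∫ r in (0:ℝ)..s, (f r - Qu r))
    (h : ℝ → ℝ) (hh_pos : ∀ t, 0 ≤ h t) (hh_int : IntegrableOn h (Set.Icc 0 T))
    (hGarding : ∀ᵐ τ ∂(volume.restrict (Set.Icc 0 T)),
      -(h τ) * ‖u τ‖ ^ 2 ≤ (inner ℂ (Qu τ) (u τ) : ℂ).re) :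
    ∀ t ∈ Set.Icc 0 T, ∀ r ∈ Set.Icc 0 t,
      ‖u r‖ ≤ Real.exp (∫ σ in (0:ℝ)..t, h σ)
        * (‖u 0‖ + 2 * ∫ s in (0:ℝ)..t, ‖f s‖) := by
  have hT0 : 0 ≤ T := hT.le
  have h0Icc : (0:ℝ) ∈ Set.Icc 0 T := ⟨le_refl _, hT0⟩
  set g : ℝ → E := fun x => f x - Qu x with hgdef
  have hg_int : IntegrableOn g (Set.Icc 0 T) := hf_int.sub hQu_int
  have hf_norm_int : IntegrableOn (fun σ => ‖f σ‖) (Set.Icc 0 T) := hf_int.norm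
  have hucont : ContinuousOn u (Set.Icc 0 T) := by
    have hc1 : ContinuousOn (fun s => u 0 + ∫ x in (0:ℝ)..s, g x) (Set.Icc 0 T) :=
      continuousOn_const.add (aux_primitive_cont hg_int)
    exact hc1.congr fun x hx => hu x hx
  obtain ⟨M, hM⟩ := isCompact_Icc.exists_bound_of_continuousOn hucont
  have hGard : ∀ᵐ τ ∂(volume.restrict (Set.Icc 0 T)),
      -(h τ) * ‖u τ‖ ^ 2 ≤ RCLike.re ⟪Qu τ, u τ⟫ := by
    filter_upwards [hGarding] with τ hτ
    simpa [RCLike.re_to_complex] using hτ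
  -- Step A : energy identity
  have stepA : ∀ s₀ ∈ Set.Icc 0 T,
      ‖u s₀‖ ^ 2 = ‖u 0‖ ^ 2 + ∫ x in Set.Ioc 0 s₀, 2 * RCLike.re ⟪g x, u x⟫ := by
    intro s₀ hs₀
    have hsub : Set.Ioc 0 s₀ ⊆ Set.Icc 0 T := fun x hx => ⟨hx.1.le, le_trans hx.2 hs₀.2⟩
    have hgint' : IntegrableOn g (Set.Ioc 0 s₀) := hg_int.mono_set hsub
    have hval : ∀ x ∈ Set.Icc 0 T, u x = u 0 + ∫ σ in Set.Ioc 0 x, g σ := by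
      intro x hx
      rw [hu x hx, integral_of_le hx.1]
    have hVc : ContinuousOn (fun x => ∫ σ in Set.Ioc 0 x, g σ) (Set.Icc 0 T) :=
      intervalIntegral.continuousOn_primitive hg_int
    obtain ⟨CV, hCV⟩ := isCompact_Icc.exists_bound_of_continuousOn hVc
    have i1 : Integrable (fun x => 2 * RCLike.re ⟪g x, u 0⟫)
        (volume.restrict (Set.Ioc 0 s₀)) :=
      aux_inner_int hgint' aestronglyMeasurable_const ‖u 0‖
        (Filter.Eventually.of_forall fun _ => le_refl _)
    have i2 : Integrable (fun x => 2 * RCLike.re ⟪g x, ∫ σ in Set.Ioc 0 x, g σ⟫)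
        (volume.restrict (Set.Ioc 0 s₀)) := by
      refine aux_inner_int hgint' ?_ CV ?_
      · exact (hVc.mono hsub).aestronglyMeasurable measurableSet_Ioc
      · filter_upwards [ae_restrict_mem measurableSet_Ioc] with x hx
        exact hCV x (hsub hx)
    have hsplit : ∫ x in Set.Ioc 0 s₀, 2 * RCLike.re ⟪g x, u x⟫
        = (∫ x in Set.Ioc 0 s₀, 2 * RCLike.re ⟪g x, u 0⟫)
          + ∫ x in Set.Ioc 0 s₀, 2 * RCLike.re ⟪g x, ∫ σ in Set.Ioc 0 x, g σ⟫ := by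
      rw [← integral_add i1 i2]
      refine integral_congr_ae ?_
      filter_upwards [ae_restrict_mem measurableSet_Ioc] with x hx
      rw [hval x (hsub hx), inner_add_right, map_add]
      ring
    have hlin : ∫ x in Set.Ioc 0 s₀, 2 * RCLike.re ⟪g x, u 0⟫
        = 2 * RCLike.re ⟪u 0, ∫ σ in Set.Ioc 0 s₀, g σ⟫ := by
      rw [MeasureTheory.integral_const_mul]
      congr 1
      calc ∫ x in Set.Ioc 0 s₀, RCLike.re ⟪g x, u 0⟫
          = ∫ x in Set.Ioc 0 s₀, RCLike.re ⟪u 0, g x⟫ :=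
            integral_congr_ae (Filter.Eventually.of_forall fun x => inner_re_symm _ _)
        _ = RCLike.re ⟪u 0, ∫ σ in Set.Ioc 0 s₀, g σ⟫ := by
            rw [integral_re (hgint'.const_inner (u 0)), integral_inner hgint' (u 0)]
    have hns := norm_add_sq (𝕜 := ℂ) (u 0) (∫ σ in Set.Ioc 0 s₀, g σ)
    rw [hsplit, hlin, ← aux_fubini_sq g s₀ hgint', hval s₀ hs₀, hns]
    ring
  -- Step D : Gronwall
  have stepD : ∀ ε > 0, ∀ x ∈ Set.Icc 0 T,
      ‖u x‖ ≤ Real.exp (∫ σ in (0:ℝ)..x, h σ)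
        * ((‖u 0‖ + ε) + 2 * ∫ σ in (0:ℝ)..x, ‖f σ‖) := by
    intro ε hε
    by_contra hcon
    push_neg at hcon
    obtain ⟨x₀, hx₀Icc, hx₀⟩ := hcon
    set c : ℝ := ‖u 0‖ + ε with hcdef
    have hcpos : 0 < c := by
      have := norm_nonneg (u 0); simp only [hcdef]; linarith
    set ψ : ℝ → ℝ := fun x => Real.exp (∫ σ in (0:ℝ)..x, h σ)
        * (c + 2 * ∫ σ in (0:ℝ)..x, ‖f σ‖) with hψdef
    have hx₀' : ψ x₀ < ‖u x₀‖ := by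
      simp only [hψdef, hcdef]
      exact hx₀
    have hψc : ContinuousOn ψ (Set.Icc 0 T) :=
      (Real.continuous_exp.comp_continuousOn (aux_primitive_cont hh_int)).mul
        (continuousOn_const.add (continuousOn_const.mul (aux_primitive_cont hf_norm_int)))
    have hHnonneg : ∀ x ∈ Set.Icc 0 T, 0 ≤ ∫ σ in (0:ℝ)..x, h σ := by
      intro x hx
      exact integral_nonneg hx.1 fun σ _ => hh_pos σ
    have hFnonneg : ∀ x ∈ Set.Icc 0 T, 0 ≤ ∫ σ in (0:ℝ)..x, ‖f σ‖ := by
      intro x hx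
      exact integral_nonneg hx.1 fun σ _ => norm_nonneg _
    have hψpos : ∀ x ∈ Set.Icc 0 T, 0 < ψ x := by
      intro x hx
      have h1 := hFnonneg x hx
      simp only [hψdef]
      have := Real.exp_pos (∫ σ in (0:ℝ)..x, h σ)
      nlinarith
    set S : Set ℝ := Set.Icc 0 T ∩ (fun x => ‖u x‖ - ψ x) ⁻¹' Set.Ici 0 with hSdef
    have hSne : S.Nonempty := ⟨x₀, hx₀Icc, by simp [Set.mem_preimage]; linarith⟩
    have hScl : IsClosed S :=
      (hucont.norm.sub hψc).preimage_isClosed_of_isClosed isClosed_Icc isClosed_Ici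
    set t₀ : ℝ := sInf S with ht₀def
    have ht₀S : t₀ ∈ S := hScl.csInf_mem hSne ⟨0, fun y hy => hy.1.1⟩
    have ht₀Icc : t₀ ∈ Set.Icc 0 T := ht₀S.1
    have ht₀ge : ψ t₀ ≤ ‖u t₀‖ := by
      have := ht₀S.2
      simp only [Set.mem_preimage, Set.mem_Ici] at this
      linarith
    have hlt : ∀ x, 0 ≤ x → x < t₀ → ‖u x‖ < ψ x := by
      intro x hx0 hxlt
      have hxIcc : x ∈ Set.Icc 0 T := ⟨hx0, le_trans hxlt.le ht₀Icc.2⟩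
      by_contra hge
      push_neg at hge
      have : t₀ ≤ x := csInf_le ⟨0, fun y hy => hy.1.1⟩
        ⟨hxIcc, by simp [Set.mem_preimage]; linarith⟩
      linarith
    -- integrability of the comparison integrand
    have hsub : Set.Ioc 0 t₀ ⊆ Set.Icc 0 T := fun x hx => ⟨hx.1.le, le_trans hx.2 ht₀Icc.2⟩
    have hgint' : IntegrableOn g (Set.Ioc 0 t₀) := hg_int.mono_set hsub
    have iL : Integrable (fun x => 2 * RCLike.re ⟪g x, u x⟫)
        (volume.restrict (Set.Ioc 0 t₀)) := by
      refine aux_inner_int hgint' ((hucont.mono hsub).aestronglyMeasurable measurableSet_Ioc)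
        M ?_
      filter_upwards [ae_restrict_mem measurableSet_Ioc] with x hx
      exact hM x (hsub hx)
    have iR : IntegrableOn (fun x =>
        2 * h x * Real.exp (2 * ∫ σ in (0:ℝ)..x, h σ)
            * (c + 2 * ∫ σ in (0:ℝ)..x, ‖f σ‖) ^ 2
          + 4 * ‖f x‖ * Real.exp (2 * ∫ σ in (0:ℝ)..x, h σ)
            * (c + 2 * ∫ σ in (0:ℝ)..x, ‖f σ‖)) (Set.Ioc 0 t₀) := by
      have hec : ContinuousOn (fun x => Real.exp (2 * ∫ σ in (0:ℝ)..x, h σ)) (Set.Icc 0 T) :=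
        Real.continuous_exp.comp_continuousOn
          (continuousOn_const.mul (aux_primitive_cont hh_int))
      have hac : ContinuousOn (fun x => c + 2 * ∫ σ in (0:ℝ)..x, ‖f σ‖) (Set.Icc 0 T) :=
        continuousOn_const.add (continuousOn_const.mul (aux_primitive_cont hf_norm_int))
      have m1 : AEStronglyMeasurable
          (fun x => 2 * Real.exp (2 * ∫ σ in (0:ℝ)..x, h σ)
            * (c + 2 * ∫ σ in (0:ℝ)..x, ‖f σ‖) ^ 2) (volume.restrict (Set.Icc 0 T)) :=
        ((continuousOn_const.mul hec).mul (hac.pow 2)).aestronglyMeasurable measurableSet_Icc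
      have m2 : AEStronglyMeasurable
          (fun x => 4 * Real.exp (2 * ∫ σ in (0:ℝ)..x, h σ)
            * (c + 2 * ∫ σ in (0:ℝ)..x, ‖f σ‖)) (volume.restrict (Set.Icc 0 T)) :=
        ((continuousOn_const.mul hec).mul hac).aestronglyMeasurable measurableSet_Icc
      obtain ⟨C1, hC1⟩ := isCompact_Icc.exists_bound_of_continuousOn
        ((continuousOn_const.mul hec).mul (hac.pow 2))
      obtain ⟨C2, hC2⟩ := isCompact_Icc.exists_bound_of_continuousOn
        ((continuousOn_const.mul hec).mul hac)
      have i1 : IntegrableOn (fun x => (2 * Real.exp (2 * ∫ σ in (0:ℝ)..x, h σ)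
          * (c + 2 * ∫ σ in (0:ℝ)..x, ‖f σ‖) ^ 2) * h x) (Set.Icc 0 T) := by
        refine Integrable.bdd_mul (c := C1) hh_int m1 ?_
        filter_upwards [ae_restrict_mem measurableSet_Icc] with x hx
        exact hC1 x hx
      have i2 : IntegrableOn (fun x => (4 * Real.exp (2 * ∫ σ in (0:ℝ)..x, h σ)
          * (c + 2 * ∫ σ in (0:ℝ)..x, ‖f σ‖)) * ‖f x‖) (Set.Icc 0 T) := by
        refine Integrable.bdd_mul (c := C2) hf_norm_int m2 ?_
        filter_upwards [ae_restrict_mem measurableSet_Icc] with x hx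
        exact hC2 x hx
      have heq : (fun x =>
          2 * h x * Real.exp (2 * ∫ σ in (0:ℝ)..x, h σ)
              * (c + 2 * ∫ σ in (0:ℝ)..x, ‖f σ‖) ^ 2
            + 4 * ‖f x‖ * Real.exp (2 * ∫ σ in (0:ℝ)..x, h σ)
              * (c + 2 * ∫ σ in (0:ℝ)..x, ‖f σ‖))
          = (fun x => (2 * Real.exp (2 * ∫ σ in (0:ℝ)..x, h σ)
              * (c + 2 * ∫ σ in (0:ℝ)..x, ‖f σ‖) ^ 2) * h x
            + (4 * Real.exp (2 * ∫ σ in (0:ℝ)..x, h σ)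
              * (c + 2 * ∫ σ in (0:ℝ)..x, ‖f σ‖)) * ‖f x‖) := by
        funext x; ring
      rw [heq]
      exact IntegrableOn.mono_set (i1.add i2) hsub
    -- a.e. comparison on Ioc 0 t₀
    have hne : ∀ᵐ x ∂(volume.restrict (Set.Ioc 0 t₀)), x ≠ t₀ := by
      have h1 : {x : ℝ | ¬ x ≠ t₀} = {t₀} := by ext x; simp
      rw [ae_iff, h1, Measure.restrict_apply (measurableSet_singleton _)]
      exact measure_mono_null Set.inter_subset_left (measure_singleton t₀)
    have hae : (fun x => 2 * RCLike.re ⟪g x, u x⟫)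
        ≤ᵐ[volume.restrict (Set.Ioc 0 t₀)] (fun x =>
          2 * h x * Real.exp (2 * ∫ σ in (0:ℝ)..x, h σ)
              * (c + 2 * ∫ σ in (0:ℝ)..x, ‖f σ‖) ^ 2
            + 4 * ‖f x‖ * Real.exp (2 * ∫ σ in (0:ℝ)..x, h σ)
              * (c + 2 * ∫ σ in (0:ℝ)..x, ‖f σ‖)) := by
      filter_upwards [ae_restrict_mem measurableSet_Ioc,
        ae_restrict_of_ae_restrict_of_subset hsub hGard, hne] with x hx hG hxne
      have hxIcc : x ∈ Set.Icc 0 T := hsub hx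
      have hxlt : x < t₀ := lt_of_le_of_ne hx.2 hxne
      have hux : ‖u x‖ < ψ x := hlt x hx.1.le hxlt
      have hsplit2 : (2:ℝ) * RCLike.re ⟪g x, u x⟫
          = 2 * RCLike.re ⟪f x, u x⟫ - 2 * RCLike.re ⟪Qu x, u x⟫ := by
        simp only [hgdef, inner_sub_left, map_sub]
        ring
      have h1 : RCLike.re ⟪f x, u x⟫ ≤ ‖f x‖ * ‖u x‖ := re_inner_le_norm _ _
      set e : ℝ := Real.exp (∫ σ in (0:ℝ)..x, h σ) with hedef
      set A : ℝ := c + 2 * ∫ σ in (0:ℝ)..x, ‖f σ‖ with hAdef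
      have hE2 : Real.exp (2 * ∫ σ in (0:ℝ)..x, h σ) = e ^ 2 := by
        rw [hedef, sq, ← Real.exp_add]
        congr 1
        ring
      have he1 : 1 ≤ e := Real.one_le_exp (hHnonneg x hxIcc)
      have hA0 : 0 < A := by
        have := hFnonneg x hxIcc
        simp only [hAdef]
        nlinarith
      have hψx : ψ x = e * A := rfl
      rw [hψx] at hux
      have hun : 0 ≤ ‖u x‖ := norm_nonneg _
      have hfn : 0 ≤ ‖f x‖ := norm_nonneg _
      have hhx : 0 ≤ h x := hh_pos x
      have husq : ‖u x‖ ^ 2 ≤ (e * A) ^ 2 := by nlinarith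
      have t1 : 2 * ‖f x‖ * ‖u x‖ ≤ 4 * ‖f x‖ * e ^ 2 * A := by
        nlinarith [mul_le_mul_of_nonneg_left hux.le hfn,
          mul_nonneg (mul_nonneg hfn hA0.le)
            (mul_nonneg (le_trans zero_le_one he1) (by linarith : (0:ℝ) ≤ 2 * e - 1))]
      have t2 : 2 * h x * ‖u x‖ ^ 2 ≤ 2 * h x * e ^ 2 * A ^ 2 := by
        nlinarith [mul_le_mul_of_nonneg_left husq hhx]
      have hGineq : 2 * RCLike.re ⟪g x, u x⟫ ≤ 2 * ‖f x‖ * ‖u x‖ + 2 * h x * ‖u x‖ ^ 2 := by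
        rw [hsplit2]
        nlinarith [hG]
      rw [hE2]
      linarith
    have ineq1 : ∫ x in Set.Ioc 0 t₀, 2 * RCLike.re ⟪g x, u x⟫
        ≤ ∫ x in Set.Ioc 0 t₀, (2 * h x * Real.exp (2 * ∫ σ in (0:ℝ)..x, h σ)
              * (c + 2 * ∫ σ in (0:ℝ)..x, ‖f σ‖) ^ 2
            + 4 * ‖f x‖ * Real.exp (2 * ∫ σ in (0:ℝ)..x, h σ)
              * (c + 2 * ∫ σ in (0:ℝ)..x, ‖f σ‖)) :=
      integral_mono_ae iL iR hae
    have ineq2 : ∫ x in Set.Ioc 0 t₀, (2 * h x * Real.exp (2 * ∫ σ in (0:ℝ)..x, h σ)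
              * (c + 2 * ∫ σ in (0:ℝ)..x, ‖f σ‖) ^ 2
            + 4 * ‖f x‖ * Real.exp (2 * ∫ σ in (0:ℝ)..x, h σ)
              * (c + 2 * ∫ σ in (0:ℝ)..x, ‖f σ‖))
        ≤ Real.exp (2 * ∫ σ in (0:ℝ)..t₀, h σ)
            * (c + 2 * ∫ σ in (0:ℝ)..t₀, ‖f σ‖) ^ 2 - c ^ 2 := by
      have HH := aux_stepC T c hcpos h (fun σ => ‖f σ‖) hh_int hf_norm_int hh_pos
        (fun σ => norm_nonneg (f σ)) t₀ ht₀Icc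
      rwa [integral_of_le ht₀Icc.1] at HH
    have hA := stepA t₀ ht₀Icc
    have hc2 : ‖u 0‖ ^ 2 < c ^ 2 := by
      have := norm_nonneg (u 0)
      simp only [hcdef]
      nlinarith
    have hψsq : ψ t₀ ^ 2 = Real.exp (2 * ∫ σ in (0:ℝ)..t₀, h σ)
        * (c + 2 * ∫ σ in (0:ℝ)..t₀, ‖f σ‖) ^ 2 := by
      simp only [hψdef]
      rw [mul_pow]
      congr 1
      rw [sq, ← Real.exp_add]
      congr 1
      ring
    have hfin2 : ‖u t₀‖ ^ 2 < ψ t₀ ^ 2 := by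
      rw [hA, hψsq]
      linarith
    have : ψ t₀ ^ 2 ≤ ‖u t₀‖ ^ 2 := pow_le_pow_left₀ (hψpos t₀ ht₀Icc).le ht₀ge 2
    linarith
  -- conclusion
  intro t ht r hr
  have hrIcc : r ∈ Set.Icc 0 T := ⟨hr.1, le_trans hr.2 ht.2⟩
  have hH : ∫ σ in (0:ℝ)..r, h σ ≤ ∫ σ in (0:ℝ)..t, h σ := by
    have h1 := integral_add_adjacent_intervals (aux_II hh_int h0Icc hrIcc)
      (aux_II hh_int hrIcc ht)
    have h2 : 0 ≤ ∫ σ in r..t, h σ := integral_nonneg hr.2 fun σ _ => hh_pos σ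
    linarith
  have hF : ∫ σ in (0:ℝ)..r, ‖f σ‖ ≤ ∫ σ in (0:ℝ)..t, ‖f σ‖ := by
    have h1 := integral_add_adjacent_intervals (aux_II hf_norm_int h0Icc hrIcc)
      (aux_II hf_norm_int hrIcc ht)
    have h2 : 0 ≤ ∫ σ in r..t, ‖f σ‖ := integral_nonneg hr.2 fun σ _ => norm_nonneg _
    linarith
  have hF0 : 0 ≤ ∫ σ in (0:ℝ)..r, ‖f σ‖ := integral_nonneg hr.1 fun σ _ => norm_nonneg _
  refine le_of_forall_pos_le_add fun ε hε => ?_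
  have heH : 0 < Real.exp (∫ σ in (0:ℝ)..t, h σ) := Real.exp_pos _
  have hD := stepD (ε / Real.exp (∫ σ in (0:ℝ)..t, h σ)) (by positivity) r hrIcc
  have hmono : Real.exp (∫ σ in (0:ℝ)..r, h σ)
      * ((‖u 0‖ + ε / Real.exp (∫ σ in (0:ℝ)..t, h σ)) + 2 * ∫ σ in (0:ℝ)..r, ‖f σ‖)
      ≤ Real.exp (∫ σ in (0:ℝ)..t, h σ)
      * ((‖u 0‖ + ε / Real.exp (∫ σ in (0:ℝ)..t, h σ)) + 2 * ∫ σ in (0:ℝ)..t, ‖f σ‖) := by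
    have hexple : Real.exp (∫ σ in (0:ℝ)..r, h σ) ≤ Real.exp (∫ σ in (0:ℝ)..t, h σ) :=
      Real.exp_le_exp.2 hH
    have hinner0 : 0 ≤ (‖u 0‖ + ε / Real.exp (∫ σ in (0:ℝ)..t, h σ))
        + 2 * ∫ σ in (0:ℝ)..r, ‖f σ‖ := by
      have := norm_nonneg (u 0)
      positivity
    refine mul_le_mul hexple ?_ hinner0 heH.le
    linarith
  have heq : Real.exp (∫ σ in (0:ℝ)..t, h σ)
      * ((‖u 0‖ + ε / Real.exp (∫ σ in (0:ℝ)..t, h σ)) + 2 * ∫ σ in (0:ℝ)..t, ‖f σ‖)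
      = Real.exp (∫ σ in (0:ℝ)..t, h σ)
      * (‖u 0‖ + 2 * ∫ σ in (0:ℝ)..t, ‖f σ‖) + ε := by
    field_simp
    ring
  linarith
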